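/- Let p be a probability distribution on a finite set of cardinality S, let X_1,…,X_n be i.i.d. samples from p, and let p̂_n denote the empirical distribution, p̂_n(s) = (1/n)·#{ i ∈ [n] : X_i = s }. Then for every ε > 0, Pr[ Σ_s |p̂_n(s) − p(s)| ≥ ε ] ≤ 2^S · exp(−n·ε²/2). -/

import Mathlib

lemma bern_hoeffding (q x : ℝ) (hq0 : 0 ≤ q) (hq1 : q ≤ 1) (hx : 0 ≤ x) :
    Real.exp (-(x*q)) * (1 - q + q * Real.exp x) ≤ Real.exp (x^2/8) := by
  have hD : ∀ y : ℝ, 0 < 1 - q + q * Real.exp y := by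
    intro y
    rcases lt_or_eq_of_le hq1 with h | h
    · have : 0 ≤ q * Real.exp y := mul_nonneg hq0 (Real.exp_pos y).le
      linarith
    · rw [h]; simpa using Real.exp_pos y
  set g1 : ℝ → ℝ := fun y => q + y/4 - q * Real.exp y / (1 - q + q * Real.exp y) with hg1def
  set g : ℝ → ℝ := fun y => q*y + y^2/8 - Real.log (1 - q + q * Real.exp y) with hgdef
  have hDd : ∀ y : ℝ, HasDerivAt (fun y => 1 - q + q * Real.exp y) (q * Real.exp y) y := by
    intro y
    simpa using ((Real.hasDerivAt_exp y).const_mul q).const_add (1 - q)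
  have hgd : ∀ y, HasDerivAt g (g1 y) y := by
    intro y
    have h1 : HasDerivAt (fun y : ℝ => q*y + y^2/8) (q + y/4) y := by
      have := ((hasDerivAt_id y).const_mul q).add ((hasDerivAt_pow 2 y).div_const 8)
      exact this.congr_deriv (by push_cast; ring)
    have h2 : HasDerivAt (fun y => Real.log (1 - q + q * Real.exp y))
        (q * Real.exp y / (1 - q + q * Real.exp y)) y := (hDd y).log (hD y).ne'
    exact h1.sub h2
  have hg1d : ∀ y, HasDerivAt g1
      (1/4 - (q * Real.exp y * (1 - q + q * Real.exp y) - q * Real.exp y * (q * Real.exp y))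
        / (1 - q + q * Real.exp y)^2) y := by
    intro y
    have h1 : HasDerivAt (fun y : ℝ => q + y/4) (0 + 1/4) y :=
      (hasDerivAt_const y q).add ((hasDerivAt_id y).div_const 4)
    have h2 : HasDerivAt (fun y => q * Real.exp y / (1 - q + q * Real.exp y))
        ((q * Real.exp y * (1 - q + q * Real.exp y) - q * Real.exp y * (q * Real.exp y))
          / (1 - q + q * Real.exp y)^2) y :=
      ((Real.hasDerivAt_exp y).const_mul q).div (hDd y) (hD y).ne'
    exact (h1.sub h2).congr_deriv (by norm_num)
  have hg1d_nonneg : ∀ y : ℝ,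
      0 ≤ 1/4 - (q * Real.exp y * (1 - q + q * Real.exp y) - q * Real.exp y * (q * Real.exp y))
        / (1 - q + q * Real.exp y)^2 := by
    intro y
    have key : ∀ u d : ℝ, 0 < d → (u*d - u*u)/d^2 ≤ 1/4 := by
      intro u d hdp
      rw [div_le_iff₀ (by positivity)]
      nlinarith [sq_nonneg (d - 2*u)]
    have := key (q * Real.exp y) (1 - q + q * Real.exp y) (hD y)
    linarith
  have hmono1 : Monotone g1 := by
    apply monotone_of_deriv_nonneg
    · exact fun y => (hg1d y).differentiableAt
    · intro y
      rw [(hg1d y).deriv]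
      exact hg1d_nonneg y
  have hg1_zero : g1 0 = 0 := by
    simp [hg1def, Real.exp_zero]
  have hg1nonneg : ∀ y : ℝ, 0 ≤ y → 0 ≤ g1 y := by
    intro y hy
    calc (0:ℝ) = g1 0 := hg1_zero.symm
    _ ≤ g1 y := hmono1 hy
  have hmono : MonotoneOn g (Set.Ici (0:ℝ)) := by
    apply monotoneOn_of_deriv_nonneg (convex_Ici 0)
    · exact Continuous.continuousOn (by
        fun_prop (disch := intro y; exact (hD y).ne'))
    · intro y hy
      exact ((hgd y).differentiableAt).differentiableWithinAt
    · intro y hy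
      rw [(hgd y).deriv]
      exact hg1nonneg y (le_of_lt (by simpa using hy))
  have hg_zero : g 0 = 0 := by
    simp [hgdef, Real.exp_zero]
  have hgx : 0 ≤ g x := by
    calc (0:ℝ) = g 0 := hg_zero.symm
    _ ≤ g x := hmono (Set.self_mem_Ici) (by simpa using hx) hx
  have hlog : Real.log (1 - q + q * Real.exp x) ≤ q*x + x^2/8 := by
    have := hgx
    simp only [hgdef] at this
    linarith
  have hDle : 1 - q + q * Real.exp x ≤ Real.exp (q*x + x^2/8) :=
    (Real.log_le_iff_le_exp (hD x)).mp hlog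
  calc Real.exp (-(x*q)) * (1 - q + q * Real.exp x)
      ≤ Real.exp (-(x*q)) * Real.exp (q*x + x^2/8) :=
        mul_le_mul_of_nonneg_left hDle (Real.exp_pos _).le
    _ = Real.exp (x^2/8) := by rw [← Real.exp_add]; ring_nf

open Finset in
lemma chern {α : Type} [Fintype α] [DecidableEq α] (p : α → ℝ) (hp0 : ∀ a, 0 ≤ p a)
    (hp1 : ∑ a, p a = 1) (n : ℕ) (ε : ℝ) (hε : 0 < ε) (B : Finset α) :
    ∑ ω : Fin n → α,
      (if (n:ℝ) * (∑ a ∈ B, p a) + n*ε/2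
          ≤ ((Finset.univ.filter fun i : Fin n => ω i ∈ B).card : ℝ)
       then ∏ i, p (ω i) else 0) ≤ Real.exp (-((n:ℝ) * ε^2)/2) := by
  set q := ∑ a ∈ B, p a with hq
  set L := 2*ε with hL
  have hq0 : 0 ≤ q := Finset.sum_nonneg fun a _ => hp0 a
  have hq1 : q ≤ 1 := by
    rw [← hp1]
    exact Finset.sum_le_sum_of_subset_of_nonneg (Finset.subset_univ B)
      (fun a _ _ => hp0 a)
  set h : α → ℝ := fun a => p a * Real.exp (L * (if a ∈ B then (1:ℝ) else 0)) with hh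
  -- termwise bound
  have step1 : ∀ ω : Fin n → α,
      (if (n:ℝ) * q + n*ε/2
          ≤ ((Finset.univ.filter fun i : Fin n => ω i ∈ B).card : ℝ)
       then ∏ i, p (ω i) else 0)
      ≤ Real.exp (-(L*((n:ℝ)*q + n*ε/2))) * ∏ i, h (ω i) := by
    intro ω
    set F : ℝ := ((Finset.univ.filter fun i : Fin n => ω i ∈ B).card : ℝ) with hF
    have hw : 0 ≤ ∏ i, p (ω i) := Finset.prod_nonneg fun i _ => hp0 (ω i)
    have hprodh : ∏ i, h (ω i) = (∏ i, p (ω i)) * Real.exp (L * F) := by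
      rw [hh]
      simp only [Finset.prod_mul_distrib, ← Real.exp_sum, ← Finset.mul_sum]
      rw [Finset.sum_boole]
    rw [hprodh]
    split_ifs with hc
    · have hexp : (1:ℝ) ≤ Real.exp (-(L*((n:ℝ)*q + n*ε/2))) * Real.exp (L * F) := by
        rw [← Real.exp_add, ← Real.exp_zero]
        apply Real.exp_le_exp.mpr
        have hL0 : 0 ≤ L := by positivity
        nlinarith
      calc ∏ i, p (ω i) = (∏ i, p (ω i)) * 1 := by ring
        _ ≤ (∏ i, p (ω i)) * (Real.exp (-(L*((n:ℝ)*q + n*ε/2))) * Real.exp (L * F)) :=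
            mul_le_mul_of_nonneg_left hexp hw
        _ = Real.exp (-(L*((n:ℝ)*q + n*ε/2))) * ((∏ i, p (ω i)) * Real.exp (L * F)) := by ring
    · positivity
  have step2 : ∑ ω : Fin n → α, ∏ i, h (ω i) = (∑ a, h a) ^ n := by
    have := Finset.prod_univ_sum (fun _ : Fin n => (Finset.univ : Finset α))
      (fun _ a => h a)
    rw [Finset.prod_const, Finset.card_univ, Fintype.card_fin,
      Fintype.piFinset_univ] at this
    exact this.symm
  have step3 : ∑ a, h a = 1 - q + q * Real.exp L := by
    have h1 : ∑ a, h a = ∑ a, (if a ∈ B then p a * Real.exp L else p a) := by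
      apply Finset.sum_congr rfl
      intro a _
      rw [hh]
      split_ifs with hab <;> simp [hab]
    rw [h1, Finset.sum_ite]
    have hf1 : Finset.univ.filter (fun a => a ∈ B) = B := by
      ext a; simp
    have hf2 : ∑ a ∈ Finset.univ.filter (fun a => ¬ a ∈ B), p a = 1 - q := by
      have := Finset.sum_filter_add_sum_filter_not Finset.univ (fun a => a ∈ B) p
      rw [hf1] at this
      rw [hp1] at this
      linarith
    rw [hf1, hf2, ← Finset.sum_mul]
    ring
  calc ∑ ω : Fin n → α,
      (if (n:ℝ) * q + n*ε/2
          ≤ ((Finset.univ.filter fun i : Fin n => ω i ∈ B).card : ℝ)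
       then ∏ i, p (ω i) else 0)
      ≤ ∑ ω : Fin n → α, Real.exp (-(L*((n:ℝ)*q + n*ε/2))) * ∏ i, h (ω i) :=
        Finset.sum_le_sum fun ω _ => step1 ω
    _ = Real.exp (-(L*((n:ℝ)*q + n*ε/2))) * (1 - q + q * Real.exp L) ^ n := by
        rw [← Finset.mul_sum, step2, step3]
    _ = (Real.exp (-(L*(q + ε/2))) * (1 - q + q * Real.exp L)) ^ n := by
        rw [mul_pow, ← Real.exp_nat_mul]
        ring_nf
    _ ≤ (Real.exp (-(ε^2/2))) ^ n := by
        have hDpos : 0 < 1 - q + q * Real.exp L := by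
          rcases lt_or_eq_of_le hq1 with hlt | heq
          · have : 0 ≤ q * Real.exp L := mul_nonneg hq0 (Real.exp_pos L).le
            linarith
          · rw [heq]; simpa using Real.exp_pos L
        apply pow_le_pow_left₀ (mul_nonneg (Real.exp_pos _).le hDpos.le)
        have hbh := bern_hoeffding q L hq0 hq1 (by positivity)
        calc Real.exp (-(L*(q + ε/2))) * (1 - q + q * Real.exp L)
            = Real.exp (-(L*q)) * (1 - q + q * Real.exp L) * Real.exp (-(L*ε/2)) := by
              rw [mul_comm (Real.exp (-(L*q)) * _) _, ← mul_assoc, ← Real.exp_add]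
              ring_nf
          _ ≤ Real.exp (L^2/8) * Real.exp (-(L*ε/2)) :=
              mul_le_mul_of_nonneg_right hbh (Real.exp_pos _).le
          _ = Real.exp (-(ε^2/2)) := by
              rw [← Real.exp_add, hL]
              ring_nf
    _ = Real.exp (-((n:ℝ) * ε^2)/2) := by
        rw [← Real.exp_nat_mul]
        ring_nf

open Finset in
/-- ℓ¹ concentration of the empirical distribution: if `p` is a probability mass function on
a finite set of cardinality `S` and `X_1, …, X_n` are i.i.d. samples from `p`, then for every
`ε > 0`, the probability that `Σ_s |p̂_n(s) - p(s)| ≥ ε` is at most `2^S · exp(-n ε²/2)`.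
The probability of the event is written out as a sum of the i.i.d. product weights over
all outcomes `ω ∈ αⁿ` belonging to the event. -/
theorem stmt6 (α : Type) [Fintype α] [DecidableEq α] (S : ℕ) (hS : Fintype.card α = S)
    (p : α → ℝ) (hp0 : ∀ a, 0 ≤ p a) (hp1 : ∑ a, p a = 1)
    (n : ℕ) (hn : 0 < n) (ε : ℝ) (hε : 0 < ε) :
    ∑ ω : Fin n → α,
        (if ε ≤ ∑ a : α,
              |((Finset.univ.filter (fun i : Fin n => ω i = a)).card : ℝ) / n - p a|
         then ∏ i : Fin n, p (ω i) else 0)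
      ≤ 2 ^ S * Real.exp (-(n * ε ^ 2) / 2) := by
  classical
  have hnR : (0:ℝ) < n := by exact_mod_cast hn
  -- key pointwise union bound
  have pointwise : ∀ ω : Fin n → α,
      (if ε ≤ ∑ a : α,
            |((Finset.univ.filter (fun i : Fin n => ω i = a)).card : ℝ) / n - p a|
       then ∏ i : Fin n, p (ω i) else 0)
      ≤ ∑ B : Finset α,
          (if (n:ℝ) * (∑ a ∈ B, p a) + n*ε/2
              ≤ ((Finset.univ.filter fun i : Fin n => ω i ∈ B).card : ℝ)
           then ∏ i, p (ω i) else 0) := by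
    intro ω
    have hterm_nonneg : ∀ B : Finset α, (0:ℝ) ≤
        (if (n:ℝ) * (∑ a ∈ B, p a) + n*ε/2
            ≤ ((Finset.univ.filter fun i : Fin n => ω i ∈ B).card : ℝ)
         then ∏ i, p (ω i) else 0) := by
      intro B
      split_ifs
      · exact Finset.prod_nonneg fun i _ => hp0 (ω i)
      · exact le_refl 0
    by_cases hev : ε ≤ ∑ a : α,
        |((Finset.univ.filter (fun i : Fin n => ω i = a)).card : ℝ) / n - p a|
    · rw [if_pos hev]
      set c : α → ℝ := fun a =>
        ((Finset.univ.filter (fun i : Fin n => ω i = a)).card : ℝ) / n with hc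
      set B₀ : Finset α := Finset.univ.filter (fun a => p a ≤ c a) with hB₀
      -- total counts sum to n
      have hcount : ∑ a, ((Finset.univ.filter (fun i : Fin n => ω i = a)).card) = n := by
        have := Finset.card_eq_sum_card_fiberwise
          (f := ω) (s := (Finset.univ : Finset (Fin n))) (t := Finset.univ)
          (fun i _ => Finset.mem_univ (ω i))
        simpa using this.symm
      have hsumc : ∑ a, c a = 1 := by
        rw [hc]
        rw [← Finset.sum_div]
        rw [show ∑ a, (((Finset.univ.filter (fun i : Fin n => ω i = a)).card : ℝ)) = (n:ℝ) by
          exact_mod_cast congrArg (Nat.cast : ℕ → ℝ) hcount]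
        field_simp
      have hzero : ∑ a, (c a - p a) = 0 := by
        rw [Finset.sum_sub_distrib, hsumc, hp1]; ring
      -- the absolute sum equals twice the positive part
      have habs : ∑ a, |c a - p a| = 2 * ∑ a ∈ B₀, (c a - p a) := by
        have hsplit := Finset.sum_filter_add_sum_filter_not Finset.univ
          (fun a => p a ≤ c a) (fun a => |c a - p a|)
        have hsplit2 := Finset.sum_filter_add_sum_filter_not Finset.univ
          (fun a => p a ≤ c a) (fun a => c a - p a)
        have h1 : ∑ a ∈ Finset.univ.filter (fun a => p a ≤ c a), |c a - p a|
            = ∑ a ∈ Finset.univ.filter (fun a => p a ≤ c a), (c a - p a) := by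
          apply Finset.sum_congr rfl
          intro a ha
          have := (Finset.mem_filter.mp ha).2
          exact abs_of_nonneg (by linarith)
        have h2 : ∑ a ∈ Finset.univ.filter (fun a => ¬ p a ≤ c a), |c a - p a|
            = ∑ a ∈ Finset.univ.filter (fun a => ¬ p a ≤ c a), -(c a - p a) := by
          apply Finset.sum_congr rfl
          intro a ha
          have := (Finset.mem_filter.mp ha).2
          exact abs_of_nonpos (by push_neg at this; linarith)
        rw [Finset.sum_neg_distrib] at h2
        rw [← hB₀] at hsplit hsplit2 h1
        linarith
      -- count of samples landing in B₀
      have hF : ∑ a ∈ B₀, ((Finset.univ.filter (fun i : Fin n => ω i = a)).card)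
          = (Finset.univ.filter fun i : Fin n => ω i ∈ B₀).card := by
        have hfib := Finset.card_eq_sum_card_fiberwise
          (f := ω) (s := Finset.univ.filter fun i : Fin n => ω i ∈ B₀) (t := B₀)
          (fun i hi => (Finset.mem_filter.mp hi).2)
        rw [hfib]
        apply Finset.sum_congr rfl
        intro a ha
        congr 1
        rw [Finset.filter_filter]
        apply Finset.filter_congr
        intro i _
        constructor
        · exact fun h => ⟨h ▸ ha, h⟩
        · exact fun h => h.2
      have hsumB : ∑ a ∈ B₀, c a
          = ((Finset.univ.filter fun i : Fin n => ω i ∈ B₀).card : ℝ) / n := by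
        rw [hc]
        rw [← Finset.sum_div]
        congr 1
        exact_mod_cast congrArg (Nat.cast : ℕ → ℝ) hF
      have key : (n:ℝ) * (∑ a ∈ B₀, p a) + n*ε/2
          ≤ ((Finset.univ.filter fun i : Fin n => ω i ∈ B₀).card : ℝ) := by
        have h3 : ε/2 ≤ ∑ a ∈ B₀, (c a - p a) := by
          rw [habs] at hev; linarith
        rw [Finset.sum_sub_distrib, hsumB] at h3
        have h4 := mul_le_mul_of_nonneg_left h3 hnR.le
        rw [mul_sub, mul_div_cancel₀ _ hnR.ne'] at h4
        linarith
      calc ∏ i, p (ω i)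
          = (if (n:ℝ) * (∑ a ∈ B₀, p a) + n*ε/2
              ≤ ((Finset.univ.filter fun i : Fin n => ω i ∈ B₀).card : ℝ)
             then ∏ i, p (ω i) else 0) := (if_pos key).symm
        _ ≤ _ := Finset.single_le_sum (fun B _ => hterm_nonneg B) (Finset.mem_univ B₀)
    · rw [if_neg hev]
      exact Finset.sum_nonneg fun B _ => hterm_nonneg B
  calc ∑ ω : Fin n → α,
      (if ε ≤ ∑ a : α,
            |((Finset.univ.filter (fun i : Fin n => ω i = a)).card : ℝ) / n - p a|
       then ∏ i : Fin n, p (ω i) else 0)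
      ≤ ∑ ω : Fin n → α, ∑ B : Finset α,
          (if (n:ℝ) * (∑ a ∈ B, p a) + n*ε/2
              ≤ ((Finset.univ.filter fun i : Fin n => ω i ∈ B).card : ℝ)
           then ∏ i, p (ω i) else 0) := Finset.sum_le_sum fun ω _ => pointwise ω
    _ = ∑ B : Finset α, ∑ ω : Fin n → α,
          (if (n:ℝ) * (∑ a ∈ B, p a) + n*ε/2
              ≤ ((Finset.univ.filter fun i : Fin n => ω i ∈ B).card : ℝ)
           then ∏ i, p (ω i) else 0) := Finset.sum_comm
    _ ≤ ∑ _B : Finset α, Real.exp (-((n:ℝ) * ε^2)/2) :=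
        Finset.sum_le_sum fun B _ => chern p hp0 hp1 n ε hε B
    _ = 2 ^ S * Real.exp (-(n * ε ^ 2) / 2) := by
        rw [Finset.sum_const, Finset.card_univ, Fintype.card_finset, hS, nsmul_eq_mul]
        push_cast
        ring
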